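/- arXiv:1211.0391 — 3 statements merged into one kernel-verified Lean document; each statement's English description precedes it below -/
import Mathlib

section
/- Ryser's formula: for an n×n matrix M over a commutative ring, per(M) = (-1)^n ∑_{S ⊆ {1,…,n}} (-1)^{|S|} ∏_{i=1}^n ∑_{j ∈ S} M_{i,j}. -/
open Finset

lemma aux_sup {α : Type*} [Fintype α] [DecidableEq α] (A : Finset α) :
    ∑ S ∈ (univ : Finset α).powerset.filter (fun S => A ⊆ S), ((-1:ℤ))^S.card
      = if A = univ then (-1)^A.card else 0 := by
  have h : ∑ S ∈ (univ : Finset α).powerset.filter (fun S => A ⊆ S), ((-1:ℤ))^S.card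
      = ∑ T ∈ ((univ : Finset α) \ A).powerset, ((-1:ℤ))^(A.card + T.card) := by
    refine Finset.sum_nbij' (i := fun S => S \ A) (j := fun T => A ∪ T) ?_ ?_ ?_ ?_ ?_
    · intro S hS
      simp only [mem_filter, mem_powerset] at hS
      simpa using Finset.sdiff_subset_sdiff hS.1 (le_refl A)
    · intro T _
      simp
    · intro S hS
      simp only [mem_filter, mem_powerset] at hS
      exact Finset.union_sdiff_of_subset hS.2
    · intro T hT
      simp only [mem_powerset] at hT
      have hd : Disjoint A T :=
        Finset.disjoint_of_subset_right hT Finset.sdiff_disjoint.symm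
      simp [Finset.union_sdiff_cancel_left hd]
    · intro S hS
      simp only [mem_filter, mem_powerset] at hS
      congr 1
      rw [Finset.card_sdiff_of_subset hS.2]
      have := Finset.card_le_card hS.2
      omega
  rw [h]
  simp only [pow_add, ← Finset.mul_sum]
  rw [Finset.sum_powerset_neg_one_pow_card]
  by_cases hA : A = univ
  · simp [hA]
  · have : (univ : Finset α) \ A ≠ ∅ := by
      simp only [ne_eq, Finset.sdiff_eq_empty_iff_subset]
      intro hsub
      exact hA (Finset.univ_subset_iff.mp hsub)
    simp [hA, this]




open Finset in
theorem stmt_8 {R : Type*} [CommRing R] (n : ℕ) (M : Matrix (Fin n) (Fin n) R) :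
    ∑ σ : Equiv.Perm (Fin n), ∏ i, M i (σ i)
      = (-1 : R) ^ n * ∑ S ∈ (Finset.univ : Finset (Fin n)).powerset,
          (-1 : R) ^ S.card * ∏ i, ∑ j ∈ S, M i j := by

  classical
  have key : ∑ S ∈ (Finset.univ : Finset (Fin n)).powerset,
      (-1 : R) ^ S.card * ∏ i, ∑ j ∈ S, M i j
      = (-1:R)^n * ∑ σ : Equiv.Perm (Fin n), ∏ i, M i (σ i) := by
    have step1 : ∑ S ∈ (Finset.univ : Finset (Fin n)).powerset,
        (-1 : R) ^ S.card * ∏ i, ∑ j ∈ S, M i j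
        = ∑ S ∈ (Finset.univ : Finset (Fin n)).powerset,
            ∑ p ∈ Fintype.piFinset (fun _ : Fin n => S),
              (-1 : R) ^ S.card * ∏ i, M i (p i) := by
      refine Finset.sum_congr rfl fun S _ => ?_
      have hps := Finset.prod_univ_sum (t := fun _ : Fin n => S) (f := fun i j => M i j)
      rw [← Finset.mul_sum]
      exact congrArg _ hps
    rw [step1]
    rw [Finset.sum_comm' (t' := (Finset.univ : Finset (Fin n → Fin n)))
      (s' := fun p => (Finset.univ : Finset (Fin n)).powerset.filter
        (fun S => Finset.image p Finset.univ ⊆ S))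
      (by
        intro S p
        simp only [Finset.mem_powerset, Fintype.mem_piFinset, Finset.mem_filter,
          Finset.mem_univ, Finset.image_subset_iff, and_true, true_and, subset_univ]
        tauto)]
    have step3 : ∀ p : Fin n → Fin n,
        ∑ S ∈ (Finset.univ : Finset (Fin n)).powerset.filter
            (fun S => Finset.image p Finset.univ ⊆ S), (-1 : R) ^ S.card * ∏ i, M i (p i)
        = (if Finset.image p Finset.univ = Finset.univ then (-1:R)^n else 0)
            * ∏ i, M i (p i) := by
      intro p
      rw [← Finset.sum_mul]
      congr 1
      have hc : ∑ S ∈ (Finset.univ : Finset (Fin n)).powerset.filter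
          (fun S => Finset.image p Finset.univ ⊆ S), (-1 : R) ^ S.card
          = ((∑ S ∈ (Finset.univ : Finset (Fin n)).powerset.filter
              (fun S => Finset.image p Finset.univ ⊆ S), (-1 : ℤ) ^ S.card : ℤ) : R) := by
        push_cast; rfl
      rw [hc, aux_sup]
      by_cases h : Finset.image p Finset.univ = Finset.univ
      · simp [h, Finset.card_univ]
      · simp [h]
    simp only [step3]
    simp only [ite_mul, zero_mul, ← Finset.sum_filter]
    rw [← Finset.mul_sum]
    congr 1
    refine (Finset.sum_bij (fun (σ : Equiv.Perm (Fin n)) _ => ⇑σ) ?_ ?_ ?_ ?_).symm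
    · intro σ _
      simp only [Finset.mem_filter, Finset.mem_univ, true_and]
      refine Finset.eq_univ_iff_forall.mpr fun x => ?_
      exact Finset.mem_image.mpr ⟨σ.symm x, Finset.mem_univ _, by simp⟩
    · intro σ _ τ _ h
      exact Equiv.coe_fn_injective h
    · intro p hp
      simp only [Finset.mem_filter, Finset.mem_univ, true_and] at hp
      have hsurj : Function.Surjective p := fun y => by
        obtain ⟨x, -, hx⟩ := Finset.mem_image.mp (hp ▸ Finset.mem_univ y)
        exact ⟨x, hx⟩
      exact ⟨Equiv.ofBijective p (Finite.surjective_iff_bijective.mp hsurj),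
        Finset.mem_univ _, rfl⟩
    · intro σ _
      rfl
  rw [key, ← mul_assoc, ← mul_pow]
  norm_num
end

section
/- Inclusion–exclusion formula for counting permutations with no fixed structure outside a set: for an n×n matrix M over a commutative ring, the number of Hamiltonian cycles weighted by arc weights equals ∑_{σ ∈ C_n} ∏_{i=1}^n M_{i,σ(i)}, where C_n ⊆ S_n is the set of n-cycles, and this sum equals ∑_{S ⊆ {2,…,n}} (-1)^{|S|} · (weighted closed walks of length n through vertex 1 avoiding S). -/
open Finset Equiv Equiv.Perm

lemma aux_pow_eq_one {n : ℕ} [NeZero n] (σ : Equiv.Perm (Fin n))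
    (hσ : ∀ a b, σ.SameCycle a b) :
    σ ^ n = 1 ∧ Function.Surjective (fun i : Fin n => (σ ^ (i : ℕ)) 0) := by
  by_cases h1 : σ = 1
  · subst h1
    have hn : ∀ x : Fin n, x = 0 := fun x => Equiv.Perm.sameCycle_one.mp (hσ x 0)
    refine ⟨one_pow n, fun x => ⟨0, ?_⟩⟩
    simp [hn x]
  · obtain ⟨x, hx⟩ : ∃ x, σ x ≠ x := by
      by_contra h; push_neg at h; exact h1 (Equiv.ext h)
    have hsupp : σ.support = univ := by
      ext y
      simp only [Equiv.Perm.mem_support, mem_univ, iff_true]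
      intro hy
      exact hx (((hσ x y).eq_of_right hy) ▸ hy)
    have hcyc : σ.IsCycle := ⟨x, hx, fun y _ => hσ x y⟩
    have hord : orderOf σ = n := by
      rw [hcyc.orderOf, hsupp, Finset.card_univ, Fintype.card_fin]
    constructor
    · calc σ ^ n = σ ^ orderOf σ := by rw [hord]
        _ = 1 := pow_orderOf_eq_one σ
    · intro y
      obtain ⟨i, hi, hiy⟩ := (hσ 0 y).exists_pow_eq'
      rw [hord] at hi
      exact ⟨⟨i, hi⟩, hiy⟩

open Fin.NatCast in
lemma aux_walk {n : ℕ} [NeZero n] (v : Fin (n+1) → Fin n)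
    (h0 : v 0 = 0) (hl : v (Fin.last n) = 0) (hs : Function.Surjective v) :
    ∃ σ : Equiv.Perm (Fin n), (∀ a b, σ.SameCycle a b) ∧
      ∀ i : Fin (n+1), (σ ^ (i : ℕ)) 0 = v i := by
  set e : Fin n → Fin n := fun i => v i.castSucc with he
  have hesurj : Function.Surjective e := by
    intro x
    obtain ⟨j, hj⟩ := hs x
    by_cases hjn : (j : ℕ) < n
    · refine ⟨⟨(j : ℕ), hjn⟩, ?_⟩
      have hcs : (Fin.castSucc ⟨(j : ℕ), hjn⟩) = j := Fin.ext (by simp)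
      simp only [he, hcs, hj]
    · have hjl : j = Fin.last n := Fin.ext (by have := j.isLt; simp only [Fin.val_last]; omega)
      refine ⟨0, ?_⟩
      simp only [he, Fin.castSucc_zero', h0, ← hj, hjl, hl]
  let eb : Fin n ≃ Fin n := Equiv.ofBijective e hesurj.bijective_of_finite
  let σ : Equiv.Perm (Fin n) := (eb.symm.trans (Equiv.addRight (1 : Fin n))).trans eb
  have hσx : ∀ x, σ x = eb (eb.symm x + 1) := fun x => rfl
  have hpow : ∀ (k : ℕ) (x : Fin n), (σ ^ k) x = eb (eb.symm x + (k : Fin n)) := by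
    intro k
    induction k with
    | zero => intro x; simp
    | succ k ih =>
      intro x
      rw [pow_succ', Equiv.Perm.mul_apply, ih, hσx, Equiv.symm_apply_apply]
      congr 1
      push_cast
      abel
  have heb0 : eb.symm 0 = 0 := by
    have : eb 0 = 0 := by
      show e 0 = 0
      simp only [he, Fin.castSucc_zero', h0]
    rw [Equiv.symm_apply_eq, this]
  refine ⟨σ, fun a b => ?_, fun i => ?_⟩
  · refine ⟨(((eb.symm b - eb.symm a : Fin n) : ℕ) : ℤ), ?_⟩
    rw [zpow_natCast, hpow, Fin.cast_val_eq_self]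
    rw [show eb.symm a + (eb.symm b - eb.symm a) = eb.symm b by abel,
      Equiv.apply_symm_apply]
  · rw [hpow, heb0, zero_add]
    show e ((i : ℕ) : Fin n) = v i
    by_cases hin : (i : ℕ) < n
    · simp only [he]
      congr 1
      exact Fin.ext (by simp [Fin.val_cast_of_lt hin])
    · have hil : i = Fin.last n := Fin.ext (by have := i.isLt; simp only [Fin.val_last]; omega)
      have : ((i : ℕ) : Fin n) = 0 := by
        rw [hil]; simp [Fin.natCast_self]
      rw [this, hil]
      simp only [he, Fin.castSucc_zero', h0, hl]

open Classical Finset in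
theorem stmt_9 {R : Type*} [CommRing R] (n : ℕ) [NeZero n]
    (M : Matrix (Fin n) (Fin n) R) :
    ∑ σ ∈ Finset.univ.filter (fun σ : Equiv.Perm (Fin n) => ∀ a b, σ.SameCycle a b),
        ∏ i, M i (σ i)
      = ∑ S ∈ ((Finset.univ : Finset (Fin n)).erase 0).powerset, (-1 : R) ^ S.card *
          ∑ v ∈ Finset.univ.filter (fun v : Fin (n + 1) → Fin n =>
              v 0 = 0 ∧ v (Fin.last n) = 0 ∧ ∀ i, v i ∉ S),
            ∏ i : Fin n, M (v i.castSucc) (v i.succ) := by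
  classical
  have hpow : ∀ (T : Finset (Fin n)), (∑ S ∈ T.powerset, (-1:R)^S.card)
      = if T = ∅ then 1 else 0 := by
    intro T
    have h := Finset.sum_powerset_neg_one_pow_card (x := T)
    have h2 : ((∑ S ∈ T.powerset, (-1:ℤ)^S.card : ℤ) : R)
        = ∑ S ∈ T.powerset, (-1:R)^S.card := by push_cast; rfl
    rw [← h2, h]
    split <;> simp
  set f : (Fin (n+1) → Fin n) → R := fun v => ∏ i : Fin n, M (v i.castSucc) (v i.succ)
    with hf
  have key : (∑ S ∈ ((Finset.univ : Finset (Fin n)).erase 0).powerset, (-1 : R) ^ S.card *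
          ∑ v ∈ Finset.univ.filter (fun v : Fin (n + 1) → Fin n =>
              v 0 = 0 ∧ v (Fin.last n) = 0 ∧ ∀ i, v i ∉ S), f v)
      = ∑ v ∈ Finset.univ.filter (fun v : Fin (n+1) → Fin n =>
          v 0 = 0 ∧ v (Fin.last n) = 0 ∧ Function.Surjective v), f v := by
    simp only [Finset.mul_sum, Finset.sum_filter]
    rw [Finset.sum_comm]
    refine Finset.sum_congr rfl fun v _ => ?_
    by_cases h0 : v 0 = 0 ∧ v (Fin.last n) = 0
    · have hset : (((Finset.univ : Finset (Fin n)).erase 0).powerset).filter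
          (fun S => ∀ i, v i ∉ S)
          = ((Finset.univ : Finset (Fin n)).erase 0 \ Finset.image v Finset.univ).powerset := by
        ext S
        rw [Finset.mem_filter, Finset.mem_powerset, Finset.mem_powerset, Finset.subset_sdiff]
        constructor
        · rintro ⟨hS, hv⟩
          refine ⟨hS, Finset.disjoint_right.2 ?_⟩
          intro a ha
          obtain ⟨i, _, rfl⟩ := Finset.mem_image.1 ha
          exact hv i
        · rintro ⟨hS, hd⟩
          exact ⟨hS, fun i => Finset.disjoint_right.1 hd
            (Finset.mem_image_of_mem v (Finset.mem_univ i))⟩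
      have hiff : ((Finset.univ : Finset (Fin n)).erase 0 \ Finset.image v Finset.univ = ∅)
          ↔ Function.Surjective v := by
        rw [Finset.sdiff_eq_empty_iff_subset]
        constructor
        · intro h x
          by_cases hx : x = (0 : Fin n)
          · exact ⟨0, by rw [h0.1, hx]⟩
          · have hxm := h (Finset.mem_erase.2 ⟨hx, Finset.mem_univ x⟩)
            obtain ⟨i, _, hi⟩ := Finset.mem_image.1 hxm
            exact ⟨i, hi⟩
        · intro h y hy
          obtain ⟨i, hi⟩ := h y
          exact Finset.mem_image.2 ⟨i, Finset.mem_univ i, hi⟩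
      simp only [h0.1, h0.2, eq_self_iff_true, true_and, mul_ite, mul_zero]
      rw [← Finset.sum_filter, hset, ← Finset.sum_mul, hpow]
      simp only [hiff]
      split_ifs <;> simp
    · have hc : ∀ S : Finset (Fin n),
          ¬(v 0 = 0 ∧ v (Fin.last n) = 0 ∧ ∀ i, v i ∉ S) :=
        fun S hS => h0 ⟨hS.1, hS.2.1⟩
      have hc2 : ¬(v 0 = 0 ∧ v (Fin.last n) = 0 ∧ Function.Surjective v) :=
        fun hS => h0 ⟨hS.1, hS.2.1⟩
      simp only [hc, hc2, if_false, mul_zero, Finset.sum_const_zero]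
  rw [key]
  refine Finset.sum_bij (fun σ _ => fun i : Fin (n+1) => (σ ^ (i : ℕ)) 0) ?_ ?_ ?_ ?_
  · intro σ hσ'
    have hσ := (Finset.mem_filter.1 hσ').2
    obtain ⟨hp, hsurj⟩ := aux_pow_eq_one σ hσ
    refine Finset.mem_filter.2 ⟨Finset.mem_univ _, ?_, ?_, ?_⟩
    · simp
    · show (σ ^ ((Fin.last n : Fin (n+1)) : ℕ)) 0 = 0
      rw [Fin.val_last, hp]; rfl
    · intro x
      obtain ⟨i, hi⟩ := hsurj x
      refine ⟨i.castSucc, ?_⟩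
      show (σ ^ ((i.castSucc : Fin (n+1)) : ℕ)) 0 = x
      rw [Fin.coe_castSucc]; exact hi
  · intro σ hσ' τ hτ' h
    have hσ := (Finset.mem_filter.1 hσ').2
    obtain ⟨_, hsurj⟩ := aux_pow_eq_one σ hσ
    refine Equiv.ext fun x => ?_
    obtain ⟨i, hi⟩ := hsurj x
    have h1 : ∀ j : Fin (n+1), (σ ^ (j : ℕ)) 0 = (τ ^ (j : ℕ)) 0 := fun j => congrFun h j
    have hx1 : (σ ^ (i : ℕ)) 0 = x := hi
    have hx2 : (τ ^ (i : ℕ)) 0 = x := by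
      have := h1 i.castSucc
      rw [Fin.coe_castSucc] at this
      rw [← this, hx1]
    calc σ x = (σ ^ ((i : ℕ) + 1)) 0 := by
          rw [pow_succ', Equiv.Perm.mul_apply, hx1]
      _ = (τ ^ ((i : ℕ) + 1)) 0 := by
          have := h1 i.succ
          rwa [Fin.val_succ] at this
      _ = τ x := by rw [pow_succ', Equiv.Perm.mul_apply, hx2]
  · intro v hv
    obtain ⟨-, h0v, hlv, hsv⟩ := Finset.mem_filter.1 hv
    obtain ⟨σ, hσ, hvi⟩ := aux_walk v h0v hlv hsv
    exact ⟨σ, Finset.mem_filter.2 ⟨Finset.mem_univ _, hσ⟩, funext fun i => hvi i⟩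
  · intro σ hσ'
    have hσ := (Finset.mem_filter.1 hσ').2
    obtain ⟨hp, hsurj⟩ := aux_pow_eq_one σ hσ
    rw [hf]
    simp only
    have hterm : ∀ i : Fin n,
        M ((σ ^ ((i.castSucc : Fin (n+1)) : ℕ)) 0) ((σ ^ ((i.succ : Fin (n+1)) : ℕ)) 0)
          = M ((σ ^ (i : ℕ)) 0) (σ ((σ ^ (i : ℕ)) 0)) := by
      intro i
      rw [Fin.coe_castSucc, Fin.val_succ, pow_succ', Equiv.Perm.mul_apply]
    rw [Finset.prod_congr rfl fun i _ => hterm i]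
    exact (Equiv.prod_comp (Equiv.ofBijective _ hsurj.bijective_of_finite)
      (fun x => M x (σ x))).symm
end

section
/- Let p be a polynomial over a commutative ring R, presented as ∑ over a finite index set T of monomials c_t · r^{d(t)}, where each index t encodes a sequence of vertices and d(t) counts the number of vertices of t lying in a fixed set X. If each contributing t with d(t) = m visits a set Y_t ⊆ X of vertices and any t with a repeated vertex has Y_t ⊊ X, then ∑_{X' ⊆ X} (-1)^{|X∖X'|} · [r^m](p restricted to X') counts exactly the t with d(t) = m, Y_t = X, and no repeated vertex. -/
open Finset in
private lemma aux_neg_one_pow {α R : Type*} [DecidableEq α] [CommRing R] (x : Finset α) :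
    (∑ s ∈ x.powerset, (-1 : R) ^ s.card) = if x = ∅ then 1 else 0 := by
  have h := congrArg (Int.cast : ℤ → R) (Finset.sum_powerset_neg_one_pow_card (x := x))
  push_cast at h
  rw [h]

open Finset in
private lemma aux_inner {α R : Type*} [DecidableEq α] [CommRing R] {Y X : Finset α}
    (hYX : Y ⊆ X) :
    (∑ X' ∈ X.powerset.filter (fun X' => Y ⊆ X'), (-1 : R) ^ (X \ X').card)
      = if Y = X then 1 else 0 := by
  rw [show (∑ X' ∈ X.powerset.filter (fun X' => Y ⊆ X'), (-1 : R) ^ (X \ X').card)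
      = ∑ S ∈ (X \ Y).powerset, (-1 : R) ^ S.card from ?_, aux_neg_one_pow]
  · congr 1
    simp only [eq_iff_iff, Finset.sdiff_eq_empty_iff_subset]
    constructor
    · intro h; exact Finset.Subset.antisymm hYX h
    · intro h; rw [h]
  · refine Finset.sum_nbij' (fun X' => X \ X') (fun S => X \ S) ?_ ?_ ?_ ?_ ?_
    · intro X' hX'
      simp only [mem_filter, mem_powerset] at hX' ⊢
      exact Finset.sdiff_subset_sdiff (le_refl X) hX'.2
    · intro S hS
      simp only [mem_powerset] at hS
      simp only [mem_filter, mem_powerset]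
      refine ⟨Finset.sdiff_subset, ?_⟩
      intro a ha
      simp only [Finset.mem_sdiff]
      refine ⟨hYX ha, fun haS => ?_⟩
      have := hS haS
      simp only [Finset.mem_sdiff] at this
      exact this.2 ha
    · intro X' hX'
      simp only [mem_filter, mem_powerset] at hX'
      exact Finset.sdiff_sdiff_eq_self hX'.1
    · intro S hS
      simp only [mem_powerset] at hS
      exact Finset.sdiff_sdiff_eq_self (hS.trans Finset.sdiff_subset)
    · intro X' _; rfl

open Classical Finset in
theorem stmt_16 {V R ι : Type*} [DecidableEq V] [CommRing R]
    (X : Finset V) (T : Finset ι) (c : ι → R) (d : ι → ℕ) (Y : ι → Finset V)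
    (rep : ι → Prop) (m : ℕ) (hm : m = X.card)
    (hYX : ∀ t ∈ T, Y t ⊆ X)
    (hrep : ∀ t ∈ T, d t = m → rep t → Y t ⊂ X)
    (hnrep : ∀ t ∈ T, d t = m → ¬ rep t → Y t = X) :
    ∑ X' ∈ X.powerset, (-1 : R) ^ ((X \ X').card) *
        ∑ t ∈ T.filter (fun t => d t = m ∧ Y t ⊆ X'), c t
      = ∑ t ∈ T.filter (fun t => d t = m ∧ Y t = X ∧ ¬ rep t), c t := by
  simp only [Finset.mul_sum, Finset.sum_filter]
  rw [Finset.sum_comm]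
  refine Finset.sum_congr rfl fun t ht => ?_
  by_cases hd : d t = m
  · simp only [hd, true_and]
    have key : (∑ x ∈ X.powerset, (-1 : R) ^ (X \ x).card * if Y t ⊆ x then c t else 0)
        = (if Y t = X then 1 else 0) * c t := by
      simp_rw [mul_ite, mul_zero]
      rw [← Finset.sum_filter, ← Finset.sum_mul, aux_inner (hYX t ht)]
    rw [key]
    by_cases hY : Y t = X
    · have hnr : ¬ rep t := fun hr => (hrep t ht hd hr).2 (hY ▸ le_refl _)
      rw [if_pos hY, if_pos ⟨hY, hnr⟩, one_mul]
    · rw [if_neg hY, if_neg (fun h => hY h.1), zero_mul]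
  · simp [hd]
end
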